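/- Let M be a commutative additive monoid, I an o-ideal of M, and a ∈ I. Then sr_I(a) ≤ sr_M(a), where sr_I denotes the stable rank computed inside the monoid I. Moreover, if M is a refinement monoid, then sr_I(a) = sr_M(a). -/
import Mathlib


/-- `a` satisfies the `n`-stable rank condition in `M`. -/
def SRCond {M : Type*} [AddCommMonoid M] (a : M) (n : ℕ) : Prop :=
  ∀ x y : M, n • a + x = a + y → ∃ e : M, n • a = a + e ∧ e + x = y

/-- The stable rank of `a`: the least positive integer `n` such that `a` satisfies
the `n`-stable rank condition, or `∞` if no such `n` exists. -/
noncomputable def sr {M : Type*} [AddCommMonoid M] (a : M) : ℕ∞ :=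
  sInf {n : ℕ∞ | ∃ m : ℕ, 0 < m ∧ SRCond a m ∧ n = (m : ℕ∞)}
theorem stmt_5 {M : Type*} [AddCommMonoid M] (I : AddSubmonoid M)
    (hI : ∀ x y : M, y ∈ I → (∃ z : M, x + z = y) → x ∈ I) (a : I) :
    sr a ≤ sr (a : M) ∧
    ((∀ x1 x2 y1 y2 : M, x1 + x2 = y1 + y2 →
        ∃ z11 z12 z21 z22 : M,
          x1 = z11 + z12 ∧ x2 = z21 + z22 ∧ y1 = z11 + z21 ∧ y2 = z12 + z22) →
      sr a = sr (a : M)) := by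
  have hdown : ∀ n : ℕ, SRCond (a : M) n → SRCond a n := by
    intro n h x y hxy
    have hxy' : n • (a : M) + (x : M) = (a : M) + (y : M) := by
      have := congrArg (Subtype.val) hxy
      push_cast at this
      exact this
    obtain ⟨e, he1, he2⟩ := h x y hxy'
    have heI : e ∈ I := hI e y y.2 ⟨x, he2⟩
    refine ⟨⟨e, heI⟩, ?_, ?_⟩
    · apply Subtype.ext; push_cast; exact he1
    · apply Subtype.ext; push_cast; exact he2
  have hle : sr a ≤ sr ((a : M)) := by
    apply sInf_le_sInf
    rintro n ⟨m, hm, hc, rfl⟩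
    exact ⟨m, hm, hdown m hc, rfl⟩
  refine ⟨hle, ?_⟩
  intro hr
  have hup : ∀ n : ℕ, SRCond a n → SRCond (a : M) n := by
    intro n h x y hxy
    obtain ⟨z11, z12, z21, z22, e1, e2, e3, e4⟩ := hr (n • (a : M)) x (a : M) y hxy
    have hna : n • (a : M) ∈ I := AddSubmonoid.nsmul_mem I a.2 n
    have hz11 : z11 ∈ I := hI z11 _ hna ⟨z12, e1.symm⟩
    have hz12 : z12 ∈ I := hI z12 _ hna ⟨z11, by rw [add_comm]; exact e1.symm⟩
    have hz21 : z21 ∈ I := hI z21 (a : M) a.2 ⟨z11, by rw [add_comm]; exact e3.symm⟩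
    have key : n • a + (⟨z21, hz21⟩ : I) = a + ⟨z12, hz12⟩ := by
      apply Subtype.ext
      push_cast
      rw [e1, e3]
      abel
    obtain ⟨e, he1, he2⟩ := h _ _ key
    have he1' : n • (a : M) = (a : M) + (e : M) := by
      have := congrArg (Subtype.val) he1
      push_cast at this
      exact this
    have he2' : (e : M) + z21 = z12 := congrArg (Subtype.val) he2
    refine ⟨e, he1', ?_⟩
    rw [e2, e4, ← he2']
    abel
  apply le_antisymm hle
  apply sInf_le_sInf
  rintro n ⟨m, hm, hc, rfl⟩
  exact ⟨m, hm, hup m hc, rfl⟩
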